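/- The rational function β(z) = z⁴(4z² − 3)/(4(z² − 1)³) is a Belyi function: for every complex number z with z² − 1 ≠ 0, if the derivative of β vanishes at z, then β(z) = 0 or β(z) = 1. -/

import Mathlib

/-- The rational function `β(z) = z⁴(4z² − 3)/(4(z² − 1)³)` is a Belyi function: all of
its finite critical values lie in `{0, 1}`. -/
theorem belyi_S411_33 (β : ℂ → ℂ)
    (hβ : ∀ z, β z = z ^ 4 * (4 * z ^ 2 - 3) / (4 * (z ^ 2 - 1) ^ 3)) :
    ∀ z : ℂ, z ^ 2 - 1 ≠ 0 → deriv β z = 0 → β z = 0 ∨ β z = 1 := by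
  intro z hz hder
  have hD : (4 : ℂ) * (z ^ 2 - 1) ^ 3 ≠ 0 := by
    simp [pow_ne_zero, hz]
  have h1 : HasDerivAt (fun x : ℂ => x ^ 4 * (4 * x ^ 2 - 3)) (24 * z ^ 5 - 12 * z ^ 3) z := by
    have h := (hasDerivAt_pow 4 z).mul
      (((hasDerivAt_pow 2 z).const_mul (4 : ℂ)).sub_const 3)
    refine h.congr_deriv ?_
    push_cast
    ring
  have h2 : HasDerivAt (fun x : ℂ => 4 * (x ^ 2 - 1) ^ 3) (24 * z * (z ^ 2 - 1) ^ 2) z := by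
    have h := ((((hasDerivAt_pow 2 z).sub_const 1).pow 3)).const_mul (4 : ℂ)
    refine h.congr_deriv ?_
    push_cast
    ring
  have hβ' : β = fun x => x ^ 4 * (4 * x ^ 2 - 3) / (4 * (x ^ 2 - 1) ^ 3) := funext hβ
  have hdiv := h1.div h2 hD
  rw [hβ'] at hder
  have hE : ((24 * z ^ 5 - 12 * z ^ 3) * (4 * (z ^ 2 - 1) ^ 3) -
      z ^ 4 * (4 * z ^ 2 - 3) * (24 * z * (z ^ 2 - 1) ^ 2)) / (4 * (z ^ 2 - 1) ^ 3) ^ 2 = 0 := by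
    rw [← hdiv.deriv]; exact hder
  have hnum : (24 * z ^ 5 - 12 * z ^ 3) * (4 * (z ^ 2 - 1) ^ 3) -
      z ^ 4 * (4 * z ^ 2 - 3) * (24 * z * (z ^ 2 - 1) ^ 2) = 0 :=
    (div_eq_zero_iff.mp hE).resolve_right (pow_ne_zero _ hD)
  have hfac : z ^ 3 * (2 - 3 * z ^ 2) * (z ^ 2 - 1) ^ 2 = 0 := by
    linear_combination hnum / 24
  have hfac' : z ^ 3 * (2 - 3 * z ^ 2) = 0 := by
    rcases mul_eq_zero.mp hfac with h | h
    · exact h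
    · exact absurd h (pow_ne_zero _ hz)
  rcases mul_eq_zero.mp hfac' with h0 | h0
  · left
    have hz0 : z = 0 := by
      exact pow_eq_zero_iff (by norm_num) |>.mp h0
    rw [hβ, hz0]
    norm_num
  · right
    have hz2 : z ^ 2 = 2 / 3 := by linear_combination -h0 / 3
    have h4 : z ^ 4 = 4 / 9 := by
      rw [show z ^ 4 = (z ^ 2) ^ 2 by ring, hz2]
      norm_num
    rw [hβ, h4, hz2]
    norm_num
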